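/- For every c ∈ ℝ with 0 < c < 1 and every w ∈ ℝ, |g_c(w)| ≤ C·(1/c + 1/(1−c)) for some absolute constant C, where g_c(w) := sinh(2πw/3)/(cosh(2πw/3) − cos(2πc)). -/

import Mathlib

open Real

noncomputable def g (c : ℝ) (w : ℝ) : ℝ :=
  Real.sinh (2 * π * w / 3) / (Real.cosh (2 * π * w / 3) - Real.cos (2 * π * c))

private lemma bound_aux (A s t m : ℝ) (hA : 0 ≤ A) (hs : 0 ≤ s) (ht : 0 < t)
    (hm0 : 0 < m) (hm : m ≤ 1 / 4) (h8 : 8 * m ^ 2 ≤ t)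
    (hsq : A ^ 2 = (s + 1) ^ 2 - 1) : A * m ≤ 2 * (s + t) := by
  rcases le_or_gt 1 s with hbig | hsmall
  · have h1 : A ≤ s + 1 := by nlinarith
    nlinarith
  · have h3 : A ^ 2 ≤ 3 * s := by nlinarith
    have e1 : (A * m) ^ 2 ≤ (3 / 8) * (s * t) := by nlinarith [sq_nonneg m, mul_nonneg hs ht.le]
    have e2 : (A * m) ^ 2 ≤ (2 * (s + t)) ^ 2 := by
      nlinarith [sq_nonneg (s - t), mul_nonneg hs ht.le]
    have hAm : 0 ≤ A * m := mul_nonneg hA hm0.le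
    nlinarith

theorem g_bound : ∃ C : ℝ, ∀ c : ℝ, 0 < c → c < 1 → ∀ w : ℝ,
    |g c w| ≤ C * (1 / c + 1 / (1 - c)) := by
  use 2
  intro c hc hc1 w
  have hpi := Real.pi_pos
  set x : ℝ := 2 * π * w / 3 with hxdef
  -- sin (π c) > 0
  have hσpos : 0 < Real.sin (π * c) :=
    Real.sin_pos_of_pos_of_lt_pi (by positivity) (by nlinarith)
  -- sin (π c) ≥ 2 c (1 - c)
  have hσ2 : 2 * (c * (1 - c)) ≤ Real.sin (π * c) := by
    rcases le_or_gt c (1 / 2) with h | h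
    · have h1 : 2 / π * (π * c) ≤ Real.sin (π * c) :=
        Real.mul_le_sin (by positivity) (by nlinarith)
      have h2 : 2 / π * (π * c) = 2 * c := by field_simp
      nlinarith
    · have hs : Real.sin (π * c) = Real.sin (π * (1 - c)) := by
        rw [show π * (1 - c) = π - π * c by ring, Real.sin_pi_sub]
      have h1 : 2 / π * (π * (1 - c)) ≤ Real.sin (π * (1 - c)) :=
        Real.mul_le_sin (by nlinarith) (by nlinarith)
      have h2 : 2 / π * (π * (1 - c)) = 2 * (1 - c) := by field_simp
      nlinarith
  -- 1 - cos (2 π c) = 2 sin(π c)^2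
  have hcos : 1 - Real.cos (2 * π * c) = 2 * Real.sin (π * c) ^ 2 := by
    have h1 : Real.cos (2 * (π * c)) = 1 - 2 * Real.sin (π * c) ^ 2 := by
      rw [Real.cos_two_mul']
      have := Real.sin_sq_add_cos_sq (π * c)
      linarith
    rw [show 2 * π * c = 2 * (π * c) by ring, h1]; ring
  have hcosh : 1 ≤ Real.cosh x := Real.one_le_cosh x
  have hsinh : Real.sinh x ^ 2 = Real.cosh x ^ 2 - 1 := by
    have := Real.cosh_sq x; nlinarith [Real.sin_sq_add_cos_sq x]
  have hd : 0 < Real.cosh x - Real.cos (2 * π * c) := by nlinarith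
  have hm : 0 < c * (1 - c) := by nlinarith
  have hc0 : c ≠ 0 := ne_of_gt hc
  have h1c : (1 : ℝ) - c ≠ 0 := ne_of_gt (by linarith)
  have hsum : 1 / c + 1 / (1 - c) = 1 / (c * (1 - c)) := by
    field_simp
    ring
  rw [g, abs_div, abs_of_pos hd, div_le_iff₀ hd, hsum]
  have habs : 0 ≤ |Real.sinh x| := abs_nonneg _
  have hsq : |Real.sinh x| ^ 2 = Real.cosh x ^ 2 - 1 := by
    rw [sq_abs]; exact hsinh
  have key : |Real.sinh x| * (c * (1 - c)) ≤
      2 * (Real.cosh x - Real.cos (2 * π * c)) := by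
    have h8 : 8 * (c * (1 - c)) ^ 2 ≤ 1 - Real.cos (2 * π * c) := by nlinarith
    have htpos : 0 < 1 - Real.cos (2 * π * c) := by nlinarith [sq_nonneg (c * (1 - c))]
    have hm4 : c * (1 - c) ≤ 1 / 4 := by nlinarith [sq_nonneg (c - 1 / 2)]
    have hsq' : |Real.sinh x| ^ 2 = ((Real.cosh x - 1) + 1) ^ 2 - 1 := by
      rw [hsq]; ring
    have := bound_aux (|Real.sinh x|) (Real.cosh x - 1) (1 - Real.cos (2 * π * c))
      (c * (1 - c)) habs (by linarith) htpos hm hm4 h8 hsq'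
    linarith
  calc |Real.sinh x| = |Real.sinh x| * (c * (1 - c)) * (1 / (c * (1 - c))) := by
        field_simp
    _ ≤ 2 * (Real.cosh x - Real.cos (2 * π * c)) * (1 / (c * (1 - c))) := by
        apply mul_le_mul_of_nonneg_right key (by positivity)
    _ = 2 * (1 / (c * (1 - c))) * (Real.cosh x - Real.cos (2 * π * c)) := by ring
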